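/- With the notation e_k = q_1⋯q_k, ê_k = e_g/e_k, B_0 = e_g and B_k = Σ_{i≤k} m_i ê_i (where gcd(q_i, m_i) = 1 and q_i ≥ 1, m_i ≥ 0), one has gcd(B_0, B_1, …, B_k) = ê_k for every 0 ≤ k ≤ g. In particular gcd(B_0, …, B_g) = 1. -/

import Mathlib

open Finset in
/-- With `e_k = q_1 ⋯ q_k`, `ê_k = e_g / e_k`, `B_0 = e_g` and
`B_k = Σ_{i ≤ k} m_i ê_i` (where `gcd (q_i) (m_i) = 1`), one has
`gcd (B_0, …, B_k) = ê_k` for every `0 ≤ k ≤ g`; in particular `gcd (B_0, …, B_g) = 1`. -/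
theorem gcd_characteristic_exponents (g : ℕ) (q m : ℕ → ℕ)
    (hq : ∀ k, 1 ≤ q k) (hcop : ∀ k, Nat.Coprime (q k) (m k))
    (e ehat B : ℕ → ℕ)
    (he : ∀ k, e k = ∏ i ∈ Icc 1 k, q i)
    (hehat : ∀ k, ehat k = e g / e k)
    (hB0 : B 0 = e g)
    (hB : ∀ k, 1 ≤ k → B k = ∑ i ∈ Icc 1 k, m i * ehat i) :
    (∀ k ≤ g, (Finset.range (k + 1)).gcd B = ehat k) ∧
      (Finset.range (g + 1)).gcd B = 1 := by
  set P : ℕ → ℕ := fun k => ∏ i ∈ Ioc k g, q i with hP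
  have hPdef : ∀ k, P k = ∏ i ∈ Ioc k g, q i := fun k => rfl
  have hIcc : ∀ k, Icc 1 k = Ioc 0 k := fun k => by
    exact Finset.Icc_add_one_left_eq_Ioc 0 k
  have hsplit : ∀ a b : ℕ, a ≤ b → b ≤ g →
      (∏ i ∈ Ioc a g, q i) = (∏ i ∈ Ioc a b, q i) * ∏ i ∈ Ioc b g, q i := by
    intro a b hab hbg
    rw [Finset.prod_Ioc_consecutive q hab hbg]
  have hehatP : ∀ k ≤ g, ehat k = P k := by
    intro k hk
    rw [hehat, he, he, hIcc, hIcc, hsplit 0 k (Nat.zero_le k) hk]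
    exact Nat.mul_div_cancel_left _ (Finset.prod_pos fun i _ => hq i)
  have main : ∀ k, k ≤ g → (range (k + 1)).gcd B = P k := by
    intro k
    induction k with
    | zero =>
      intro _
      rw [range_one, gcd_singleton, hB0, he, hIcc, hPdef]
      exact normalize_eq _
    | succ k ih =>
      intro hk
      have hk' : k ≤ g := Nat.le_of_succ_le hk
      rw [Finset.range_add_one, Finset.gcd_insert, ih hk']
      -- B (k+1) = C * P (k+1)
      have hBsucc : B (k + 1) =
          (∑ i ∈ Icc 1 (k + 1), m i * ∏ j ∈ Ioc i (k + 1), q j) * P (k + 1) := by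
        rw [hB (k + 1) (Nat.le_add_left 1 k), Finset.sum_mul]
        refine Finset.sum_congr rfl fun i hi => ?_
        have hi1 := (Finset.mem_Icc.mp hi).1
        have hi2 := (Finset.mem_Icc.mp hi).2
        rw [hehatP i (le_trans hi2 hk), hPdef i, hPdef (k + 1), hsplit i (k + 1) hi2 hk, mul_assoc]
      have hPk : P k = q (k + 1) * P (k + 1) := by
        rw [hPdef k, hPdef (k + 1), hsplit k (k + 1) (Nat.le_succ k) hk]
        congr 1
        rw [Nat.Ioc_succ_singleton, Finset.prod_singleton]
      set C : ℕ := ∑ i ∈ Icc 1 (k + 1), m i * ∏ j ∈ Ioc i (k + 1), q j with hC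
      have hCcop : Nat.Coprime C (q (k + 1)) := by
        have hsum : C = m (k + 1) +
            (∑ i ∈ Icc 1 k, m i * ∏ j ∈ Ioc i k, q j) * q (k + 1) := by
          rw [hC, Finset.sum_Icc_succ_top (Nat.le_add_left 1 k)]
          rw [Finset.Ioc_self, Finset.prod_empty, mul_one, add_comm, Finset.sum_mul]
          congr 1
          refine Finset.sum_congr rfl fun i hi => ?_
          have hi2 := (Finset.mem_Icc.mp hi).2
          rw [Finset.prod_Ioc_succ_top hi2, ← mul_assoc]
        rw [hsum]
        exact ((Nat.coprime_add_mul_right_right _ _ _).mpr (hcop (k + 1))).symm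
      rw [hBsucc, hPk]
      have : GCDMonoid.gcd (C * P (k + 1)) (q (k + 1) * P (k + 1)) =
          Nat.gcd (C * P (k + 1)) (q (k + 1) * P (k + 1)) := rfl
      rw [this, Nat.gcd_mul_right, hCcop, one_mul]
  refine ⟨fun k hk => by rw [main k hk, hehatP k hk], ?_⟩
  rw [main g le_rfl, hPdef g]
  simp
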